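/- For p ∈ (1,∞) define g_p : ℝ → ℝ by g_p(x) := |x|^{p−2}x for x ≠ 0 and g_p(0) := 0. Then: (i) for every natural number l, the function g_p is l-times differentiable at every x ≠ 0, and there is a constant C = C(p,l) such that |g_p^{(l)}(x)| ≤ C|x|^{p−1−l} for all x ≠ 0; (ii) if moreover l < p−1, then g_p is l-times continuously differentiable on all of ℝ and the bound |g_p^{(l)}(x)| ≤ C|x|^{p−1−l} holds for every x ∈ ℝ. -/

import Mathlib

/-- The function `g_p(x) = |x|^{p-2} x` (with `g_p(0) = 0`; note that for `x = 0`
the product `|0|^{p-2} * 0` is `0` in any case). -/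
noncomputable def gp (p : ℝ) (x : ℝ) : ℝ := |x| ^ (p - 2) * x

noncomputable def FG (b : Bool) (a : ℝ) (x : ℝ) : ℝ :=
  if b then |x| ^ (a - 1) * x else |x| ^ a

lemma FG_zero (b : Bool) {a : ℝ} (ha : a ≠ 0) : FG b a 0 = 0 := by
  cases b <;> simp [FG, Real.zero_rpow ha]

lemma abs_FG (b : Bool) (a : ℝ) {x : ℝ} (hx : x ≠ 0) : |FG b a x| = |x| ^ a := by
  have h : |x| ≠ 0 := abs_ne_zero.2 hx
  cases b with
  | false => simpa [FG] using abs_of_nonneg (Real.rpow_nonneg (abs_nonneg x) a)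
  | true =>
      simp only [FG, if_pos, abs_mul, abs_of_nonneg (Real.rpow_nonneg (abs_nonneg x) (a-1)),
        abs_abs]
      rw [← Real.rpow_add_one h]
      norm_num

lemma tendsto_abs_rpow {c : ℝ} (hc : 0 < c) :
    Filter.Tendsto (fun y : ℝ => |y| ^ c) (nhds 0) (nhds 0) := by
  have h1 : ContinuousAt (fun t : ℝ => t ^ c) (|(0:ℝ)|) := by
    simpa using Real.continuousAt_rpow_const 0 c (Or.inr hc.le)
  have := (h1.comp continuous_abs.continuousAt).tendsto
  simpa [Function.comp_def, Real.zero_rpow hc.ne'] using this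

lemma hasDerivAt_FG_zero (b : Bool) {a : ℝ} (ha : 1 < a) :
    HasDerivAt (FG b a) (a * FG (!b) (a - 1) 0) 0 := by
  have ha1 : a - 1 ≠ 0 := by linarith
  rw [FG_zero _ ha1, mul_zero]
  rw [hasDerivAt_iff_tendsto_slope]
  refine squeeze_zero_norm' (a := fun y : ℝ => |y| ^ (a - 1)) ?_
    ((tendsto_abs_rpow (by linarith)).mono_left nhdsWithin_le_nhds)
  filter_upwards [self_mem_nhdsWithin] with y hy
  have hy' : (y : ℝ) ≠ 0 := hy
  rw [slope_def_field, FG_zero _ (by linarith : a ≠ 0), sub_zero, sub_zero,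
    Real.norm_eq_abs, abs_div, abs_FG _ _ hy',
    Real.rpow_sub_one (abs_ne_zero.2 hy')]

lemma FG_true (a x : ℝ) : FG true a x = |x| ^ (a-1) * x := rfl
lemma FG_false (a x : ℝ) : FG false a x = |x| ^ a := rfl

lemma rpow_shift {x : ℝ} (hx : x ≠ 0) (c : ℝ) : x ^ c = x ^ (c - 1) * x := by
  rw [← Real.rpow_add_one hx]; norm_num

lemma hasDerivAt_FG_ne (b : Bool) (a : ℝ) {x : ℝ} (hx : x ≠ 0) :
    HasDerivAt (FG b a) (a * FG (!b) (a - 1) x) x := by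
  rcases hx.lt_or_gt with h | h
  · -- x < 0
    have hev : ∀ᶠ y in nhds x, y < 0 := eventually_lt_nhds h
    have hne : -x ≠ 0 := by simpa using hx
    cases b with
    | false =>
        have h1 : HasDerivAt (fun y : ℝ => (-y) ^ a) (a * (-x) ^ (a-1) * (-1)) x :=
          (Real.hasDerivAt_rpow_const (Or.inl hne)).comp x (hasDerivAt_neg x)
        have h2 : FG false a =ᶠ[nhds x] fun y => (-y) ^ a := by
          filter_upwards [hev] with y hy
          simp [FG_false, abs_of_neg hy]
        have h3 := h1.congr_of_eventuallyEq h2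
        refine h3.congr_deriv ?_
        simp only [Bool.not_false, FG_true]
        rw [abs_of_neg h, rpow_shift hne (a-1)]
        ring
    | true =>
        have h1 : HasDerivAt (fun y : ℝ => -((-y) ^ a)) (-(a * (-x) ^ (a-1) * (-1))) x :=
          ((Real.hasDerivAt_rpow_const (Or.inl hne)).comp x (hasDerivAt_neg x)).neg
        have h2 : FG true a =ᶠ[nhds x] fun y => -((-y) ^ a) := by
          filter_upwards [hev] with y hy
          have hy' : -y ≠ 0 := by simpa using ne_of_lt hy
          rw [FG_true, abs_of_neg hy, rpow_shift hy' a]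
          ring
        have h3 := h1.congr_of_eventuallyEq h2
        refine h3.congr_deriv ?_
        simp only [Bool.not_true, FG_false]
        rw [abs_of_neg h]
        ring
  · -- 0 < x
    have hev : ∀ᶠ y in nhds x, 0 < y := eventually_gt_nhds h
    cases b with
    | false =>
        have h1 : HasDerivAt (fun y : ℝ => y ^ a) (a * x ^ (a-1)) x :=
          Real.hasDerivAt_rpow_const (Or.inl hx)
        have h2 : FG false a =ᶠ[nhds x] fun y => y ^ a := by
          filter_upwards [hev] with y hy
          simp [FG_false, abs_of_pos hy]
        have h3 := h1.congr_of_eventuallyEq h2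
        refine h3.congr_deriv ?_
        simp only [Bool.not_false, FG_true]
        rw [abs_of_pos h, rpow_shift hx (a-1)]
    | true =>
        have h1 : HasDerivAt (fun y : ℝ => y ^ a) (a * x ^ (a-1)) x :=
          Real.hasDerivAt_rpow_const (Or.inl hx)
        have h2 : FG true a =ᶠ[nhds x] fun y => y ^ a := by
          filter_upwards [hev] with y hy
          rw [FG_true, abs_of_pos hy, ← rpow_shift (ne_of_gt hy) a]
        have h3 := h1.congr_of_eventuallyEq h2
        refine h3.congr_deriv ?_
        simp only [Bool.not_true, FG_false]
        rw [abs_of_pos h]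

lemma hasDerivAt_FG (b : Bool) {a : ℝ} (ha : 1 < a) (x : ℝ) :
    HasDerivAt (FG b a) (a * FG (!b) (a - 1) x) x := by
  by_cases hx : x = 0
  · subst hx; exact hasDerivAt_FG_zero b ha
  · exact hasDerivAt_FG_ne b a hx

lemma contDiffAt_FG (n : ℕ) (b : Bool) (a : ℝ) {x : ℝ} (hx : x ≠ 0) :
    ContDiffAt ℝ n (FG b a) x := by
  rcases hx.lt_or_gt with h | h
  · have hev : ∀ᶠ y in nhds x, y < 0 := eventually_lt_nhds h
    have hne : -x ≠ 0 := by simpa using hx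
    have hc : ContDiffAt ℝ n (fun y : ℝ => (-y) ^ a) x :=
      (Real.contDiffAt_rpow_const_of_ne hne).comp x (contDiff_neg.contDiffAt)
    cases b with
    | false =>
        refine hc.congr_of_eventuallyEq ?_
        filter_upwards [hev] with y hy
        simp [FG_false, abs_of_neg hy]
    | true =>
        refine hc.neg.congr_of_eventuallyEq ?_
        filter_upwards [hev] with y hy
        have hy' : -y ≠ 0 := by simpa using ne_of_lt hy
        rw [FG_true, abs_of_neg hy, rpow_shift hy' a]
        ring
  · have hev : ∀ᶠ y in nhds x, 0 < y := eventually_gt_nhds h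
    have hc : ContDiffAt ℝ n (fun y : ℝ => y ^ a) x :=
      Real.contDiffAt_rpow_const_of_ne hx
    cases b with
    | false =>
        refine hc.congr_of_eventuallyEq ?_
        filter_upwards [hev] with y hy
        simp [FG_false, abs_of_pos hy]
    | true =>
        refine hc.congr_of_eventuallyEq ?_
        filter_upwards [hev] with y hy
        rw [FG_true, abs_of_pos hy, ← rpow_shift (ne_of_gt hy) a]

lemma continuous_FG (b : Bool) {a : ℝ} (ha : 0 < a) : Continuous (FG b a) := by
  rw [continuous_iff_continuousAt]
  intro x
  by_cases hx : x = 0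
  · subst hx
    have hb : Filter.Tendsto (FG b a) (nhds 0) (nhds 0) := by
      refine squeeze_zero_norm (a := fun y : ℝ => |y| ^ a) ?_ (tendsto_abs_rpow ha)
      intro y
      by_cases hy : y = 0
      · subst hy
        rw [FG_zero b ha.ne']
        simpa using Real.rpow_nonneg (abs_nonneg (0:ℝ)) a
      · rw [Real.norm_eq_abs, abs_FG b a hy]
    unfold ContinuousAt
    rwa [FG_zero b ha.ne']
  · exact (hasDerivAt_FG_ne b a hx).continuousAt

noncomputable def cc (l : ℕ) (a : ℝ) : ℝ := ∏ i ∈ Finset.range l, (a - i)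

lemma iter_ne (b : Bool) (a : ℝ) (l : ℕ) :
    ∀ x : ℝ, x ≠ 0 →
      iteratedDeriv l (FG b a) x = cc l a * FG ((! ·)^[l] b) (a - l) x := by
  induction l with
  | zero => intro x hx; simp [cc, iteratedDeriv_zero]
  | succ l IH =>
      intro x hx
      rw [iteratedDeriv_succ]
      have hev : iteratedDeriv l (FG b a) =ᶠ[nhds x]
          fun y => cc l a * FG ((! ·)^[l] b) (a - l) y := by
        filter_upwards [compl_singleton_mem_nhds hx] with y hy
        exact IH y hy
      rw [hev.deriv_eq]
      rw [((hasDerivAt_FG_ne ((! ·)^[l] b) (a - l) hx).const_mul (cc l a)).deriv]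
      have hcc : cc (l+1) a = cc l a * (a - (l:ℝ)) := Finset.prod_range_succ _ _
      rw [hcc]
      rw [Function.iterate_succ_apply']
      have hcast : a - (l:ℝ) - 1 = a - ((l:ℕ)+1 : ℕ) := by push_cast; ring
      rw [hcast]
      ring

lemma global_FG : ∀ (l : ℕ) (b : Bool) (a : ℝ), (l : ℝ) < a →
    ContDiff ℝ l (FG b a) ∧
      iteratedDeriv l (FG b a) = fun x => cc l a * FG ((! ·)^[l] b) (a - l) x := by
  intro l
  induction l with
  | zero =>
      intro b a ha
      norm_num at ha
      constructor
      · rw [show ((0:ℕ) : WithTop ℕ∞) = 0 from rfl, contDiff_zero]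
        exact continuous_FG b ha
      · funext x
        simp [cc, iteratedDeriv_zero]
  | succ l IH =>
      intro b a ha
      have hl : (l : ℝ) < a := by push_cast at ha ⊢; linarith
      have ha0 : 1 < a := by
        have : (0:ℝ) ≤ l := Nat.cast_nonneg l
        push_cast at ha; linarith
      have ha1 : 1 < a - l := by push_cast at ha; linarith
      obtain ⟨hcd, hit⟩ := IH b a hl
      have hIH2 := IH (!b) (a - 1) (by push_cast at ha ⊢; linarith)
      constructor
      · have hdiff : Differentiable ℝ (FG b a) := fun x =>
          (hasDerivAt_FG b ha0 x).differentiableAt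
        have hderiv : deriv (FG b a) = fun x => a * FG (!b) (a - 1) x :=
          funext fun x => (hasDerivAt_FG b ha0 x).deriv
        have hcast : ((l + 1 : ℕ) : WithTop ℕ∞) = (l : WithTop ℕ∞) + 1 := by
          push_cast; rfl
        rw [hcast, contDiff_succ_iff_deriv]
        refine ⟨hdiff, by simp, ?_⟩
        rw [hderiv]
        exact contDiff_const.mul hIH2.1
      · funext x
        rw [iteratedDeriv_succ, hit]
        rw [((hasDerivAt_FG ((! ·)^[l] b) ha1 x).const_mul (cc l a)).deriv]
        have hcc : cc (l+1) a = cc l a * (a - (l:ℝ)) := Finset.prod_range_succ _ _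
        rw [hcc, Function.iterate_succ_apply']
        have hcast : a - (l:ℝ) - 1 = a - ((l:ℕ)+1 : ℕ) := by push_cast; ring
        rw [hcast]
        ring

/-- regularity of `g_p`.
For `p ∈ (1,∞)`: (i) for every `l : ℕ`, `g_p` is `l`-times differentiable at every
`x ≠ 0` and `|g_p^{(l)}(x)| ≤ C |x|^{p−1−l}` there, with `C = C(p,l)`;
(ii) if `l < p − 1`, then `g_p ∈ C^l(ℝ)` and the bound holds for all `x ∈ ℝ`. -/
theorem stmt19 (p : ℝ) (hp : 1 < p) :
    (∀ l : ℕ, ∃ C : ℝ, ∀ x : ℝ, x ≠ 0 →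
        ContDiffAt ℝ l (gp p) x ∧ |iteratedDeriv l (gp p) x| ≤ C * |x| ^ (p - 1 - l)) ∧
    (∀ l : ℕ, (l : ℝ) < p - 1 → ∃ C : ℝ,
        ContDiff ℝ l (gp p) ∧ ∀ x : ℝ, |iteratedDeriv l (gp p) x| ≤ C * |x| ^ (p - 1 - l)) := by
  have hgp : gp p = FG true (p - 1) := by
    funext x
    rw [gp, FG_true, show p - 1 - 1 = p - 2 by ring]
  constructor
  · intro l
    refine ⟨|cc l (p-1)|, fun x hx => ⟨?_, ?_⟩⟩
    · rw [hgp]; exact contDiffAt_FG l true (p-1) hx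
    · rw [hgp, iter_ne true (p-1) l x hx, abs_mul, abs_FG _ _ hx]
  · intro l hl
    obtain ⟨hcd, hit⟩ := global_FG l true (p-1) hl
    refine ⟨|cc l (p-1)|, by rw [hgp]; exact hcd, fun x => ?_⟩
    rw [hgp, hit]
    simp only [abs_mul]
    by_cases hx : x = 0
    · subst hx
      rw [FG_zero _ (by linarith : p - 1 - (l:ℝ) ≠ 0), abs_zero, mul_zero]
      positivity
    · rw [abs_FG _ _ hx]
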